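/- The generalized Huber loss function h^α_{a,b} is differentiable on ℝ, with derivative (h^α_{a,b})'(u) = |𝟙_{u≥0} − α| · κ_{a,b}(u) for all u ∈ ℝ, where κ_{a,b}(u) = max(min(u, b), −a). -/

import Mathlib

open Set

/-- The capping function `κ_{a,b}(x) = max(min(x,b), -a)`. -/
noncomputable def kap (a b x : ℝ) : ℝ := max (min x b) (-a)

/-- The generalized Huber loss `h^α_{a,b}`. -/
noncomputable def genHuber (α a b u : ℝ) : ℝ :=
  if u < -a then -α * a * (u + a / 2)
  else if b < u then (1 - α) * b * (u - b / 2)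
  else |(if 0 ≤ u then (1 : ℝ) else 0) - α| * u ^ 2 / 2

private lemma glueDeriv {f : ℝ → ℝ} {f' x : ℝ} (h1 : HasDerivWithinAt f f' (Iic x) x)
    (h2 : HasDerivWithinAt f f' (Ici x) x) : HasDerivAt f f' x := by
  have h := h1.union h2
  rwa [Iic_union_Ici, hasDerivWithinAt_univ] at h

/-- The generalized Huber loss function is differentiable on ℝ with derivative
`(h^α_{a,b})'(u) = |𝟙_{u ≥ 0} - α| · κ_{a,b}(u)`. -/
theorem stmt0 (a b α : ℝ) (ha : 0 < a) (hb : 0 < b) (hα : α ∈ Set.Ioo (0 : ℝ) 1) (u : ℝ) :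
    HasDerivAt (genHuber α a b) (|(if 0 ≤ u then (1 : ℝ) else 0) - α| * kap a b u) u := by
  obtain ⟨hα0, hα1⟩ := hα
  have h1α : (0:ℝ) < 1 - α := by linarith
  -- derivatives of the smooth pieces
  have d1 : ∀ x : ℝ, HasDerivAt (fun u => -α * a * (u + a / 2)) (-α * a) x := by
    intro x
    simpa using ((hasDerivAt_id x).add_const (a / 2)).const_mul (-α * a)
  have d2 : ∀ x : ℝ, HasDerivAt (fun u => (1 - α) * b * (u - b / 2)) ((1 - α) * b) x := by
    intro x
    simpa using ((hasDerivAt_id x).sub_const (b / 2)).const_mul ((1 - α) * b)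
  have d3 : ∀ (c x : ℝ), HasDerivAt (fun u => c * u ^ 2 / 2) (c * x) x := by
    intro c x
    have h := ((hasDerivAt_pow 2 x).const_mul c).div_const 2
    convert h using 1
    · rfl
    · rfl
    · ring
  -- pointwise descriptions of genHuber on the four regions
  have e1 : ∀ x, x ≤ -a → genHuber α a b x = -α * a * (x + a / 2) := by
    intro x hx
    rcases lt_or_eq_of_le hx with h | h
    · rw [genHuber, if_pos h]
    · subst h
      rw [genHuber, if_neg (lt_irrefl _), if_neg (by linarith),
        if_neg (by linarith : ¬ (0:ℝ) ≤ -a), zero_sub, abs_neg, abs_of_pos hα0]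
      ring
  have e2 : ∀ x, b ≤ x → genHuber α a b x = (1 - α) * b * (x - b / 2) := by
    intro x hx
    rcases lt_or_eq_of_le hx with h | h
    · rw [genHuber, if_neg (by linarith), if_pos h]
    · rw [← h, genHuber, if_neg (by linarith), if_neg (lt_irrefl _),
        if_pos (by linarith : (0:ℝ) ≤ b), abs_of_pos h1α]
      ring
  have e3 : ∀ x, -a ≤ x → x ≤ 0 → genHuber α a b x = α * x ^ 2 / 2 := by
    intro x hx1 hx2
    rcases lt_or_eq_of_le hx2 with h | h
    · rw [genHuber, if_neg (not_lt.mpr hx1), if_neg (by linarith),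
        if_neg (not_le.mpr h), zero_sub, abs_neg, abs_of_pos hα0]
    · subst h
      rw [genHuber, if_neg (by linarith), if_neg (by linarith)]
      norm_num
  have e4 : ∀ x, 0 ≤ x → x ≤ b → genHuber α a b x = (1 - α) * x ^ 2 / 2 := by
    intro x hx1 hx2
    rcases lt_or_eq_of_le hx1 with h | h
    · rw [genHuber, if_neg (by linarith), if_neg (not_lt.mpr hx2),
        if_pos (le_of_lt h), abs_of_pos h1α]
    · rw [← h, genHuber, if_neg (by linarith), if_neg (by linarith)]
      norm_num
  rcases lt_trichotomy u (-a) with h | h | h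
  · -- u < -a
    have key : HasDerivAt (genHuber α a b) (-α * a) u := by
      refine (d1 u).congr_of_eventuallyEq ?_
      filter_upwards [Iio_mem_nhds h] with x hx
      exact e1 x (le_of_lt hx)
    have hEq : |(if 0 ≤ u then (1 : ℝ) else 0) - α| * kap a b u = -α * a := by
      rw [if_neg (by linarith : ¬ (0:ℝ) ≤ u), zero_sub, abs_neg, abs_of_pos hα0, kap,
        min_eq_left (by linarith), max_eq_right (le_of_lt h)]
      ring
    rw [hEq]; exact key
  · -- u = -a
    subst h
    have dl : HasDerivWithinAt (genHuber α a b) (α * -a) (Iic (-a)) (-a) := by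
      have : HasDerivAt (fun u => -α * a * (u + a / 2)) (α * -a) (-a) := by
        convert d1 (-a) using 1; ring
      exact this.hasDerivWithinAt.congr (fun x hx => e1 x (mem_Iic.mp hx)) (e1 _ le_rfl)
    have dr : HasDerivWithinAt (genHuber α a b) (α * -a) (Ici (-a)) (-a) := by
      refine (d3 α (-a)).hasDerivWithinAt.congr_of_eventuallyEq ?_
        (e3 _ le_rfl (by linarith))
      filter_upwards [mem_nhdsWithin_of_mem_nhds (Iio_mem_nhds (show -a < (0:ℝ) by linarith)),
        self_mem_nhdsWithin] with x hx1 hx2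
      exact e3 x hx2 (le_of_lt hx1)
    have hEq : |(if 0 ≤ -a then (1 : ℝ) else 0) - α| * kap a b (-a) = α * -a := by
      rw [if_neg (by linarith : ¬ (0:ℝ) ≤ -a), zero_sub, abs_neg, abs_of_pos hα0, kap,
        min_eq_left (by linarith), max_self]
    rw [hEq]; exact glueDeriv dl dr
  · -- -a < u
    rcases lt_trichotomy u 0 with h0 | h0 | h0
    · -- -a < u < 0
      have key : HasDerivAt (genHuber α a b) (α * u) u := by
        refine (d3 α u).congr_of_eventuallyEq ?_
        filter_upwards [Ioo_mem_nhds h h0] with x hx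
        exact e3 x hx.1.le hx.2.le
      have hEq : |(if 0 ≤ u then (1 : ℝ) else 0) - α| * kap a b u = α * u := by
        rw [if_neg (not_le.mpr h0), zero_sub, abs_neg, abs_of_pos hα0, kap,
          min_eq_left (by linarith), max_eq_left (le_of_lt h)]
      rw [hEq]; exact key
    · -- u = 0
      subst h0
      have dl : HasDerivWithinAt (genHuber α a b) 0 (Iic 0) 0 := by
        have h3 : HasDerivAt (fun u : ℝ => α * u ^ 2 / 2) 0 0 := by simpa using d3 α 0
        refine h3.hasDerivWithinAt.congr_of_eventuallyEq ?_ (e3 0 (by linarith) le_rfl)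
        filter_upwards [mem_nhdsWithin_of_mem_nhds (Ioi_mem_nhds (show -a < (0:ℝ) by linarith)),
          self_mem_nhdsWithin] with x hx1 hx2
        exact e3 x (le_of_lt hx1) hx2
      have dr : HasDerivWithinAt (genHuber α a b) 0 (Ici 0) 0 := by
        have h4 : HasDerivAt (fun u : ℝ => (1 - α) * u ^ 2 / 2) 0 0 := by
          simpa using d3 (1 - α) 0
        refine h4.hasDerivWithinAt.congr_of_eventuallyEq ?_ (e4 0 le_rfl hb.le)
        filter_upwards [mem_nhdsWithin_of_mem_nhds (Iio_mem_nhds hb), self_mem_nhdsWithin]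
          with x hx1 hx2
        exact e4 x hx2 (le_of_lt hx1)
      have hEq : |(if (0:ℝ) ≤ 0 then (1 : ℝ) else 0) - α| * kap a b 0 = 0 := by
        rw [kap, min_eq_left hb.le, max_eq_left (by linarith : -a ≤ (0:ℝ)), mul_zero]
      rw [hEq]; exact glueDeriv dl dr
    · -- 0 < u
      rcases lt_trichotomy u b with h2 | h2 | h2
      · -- 0 < u < b
        have key : HasDerivAt (genHuber α a b) ((1 - α) * u) u := by
          refine (d3 (1 - α) u).congr_of_eventuallyEq ?_
          filter_upwards [Ioo_mem_nhds h0 h2] with x hx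
          exact e4 x hx.1.le hx.2.le
        have hEq : |(if 0 ≤ u then (1 : ℝ) else 0) - α| * kap a b u = (1 - α) * u := by
          rw [if_pos (le_of_lt h0), abs_of_pos h1α, kap, min_eq_left (le_of_lt h2),
            max_eq_left (by linarith)]
        rw [hEq]; exact key
      · -- u = b
        have h2' : b = u := h2.symm
        subst h2'
        have dl : HasDerivWithinAt (genHuber α a b) ((1 - α) * b) (Iic b) b := by
          refine (d3 (1 - α) b).hasDerivWithinAt.congr_of_eventuallyEq ?_
            (e4 b h0.le le_rfl)
          filter_upwards [mem_nhdsWithin_of_mem_nhds (Ioi_mem_nhds h0), self_mem_nhdsWithin]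
            with x hx1 hx2
          exact e4 x (le_of_lt hx1) hx2
        have dr : HasDerivWithinAt (genHuber α a b) ((1 - α) * b) (Ici b) b :=
          (d2 b).hasDerivWithinAt.congr (fun x hx => e2 x (mem_Ici.mp hx)) (e2 _ le_rfl)
        have hEq : |(if 0 ≤ b then (1 : ℝ) else 0) - α| * kap a b b = (1 - α) * b := by
          rw [if_pos hb.le, abs_of_pos h1α, kap, min_self, max_eq_left (by linarith)]
        rw [hEq]; exact glueDeriv dl dr
      · -- b < u
        have key : HasDerivAt (genHuber α a b) ((1 - α) * b) u := by
          refine (d2 u).congr_of_eventuallyEq ?_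
          filter_upwards [Ioi_mem_nhds h2] with x hx
          exact e2 x (le_of_lt hx)
        have hEq : |(if 0 ≤ u then (1 : ℝ) else 0) - α| * kap a b u = (1 - α) * b := by
          rw [if_pos (by linarith : (0:ℝ) ≤ u), abs_of_pos h1α, kap,
            min_eq_right (le_of_lt h2), max_eq_left (by linarith)]
        rw [hEq]; exact key
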